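/- Let τ₁, τ₂ : ℝ → ℂ be twice continuously differentiable on [0,1] and let y : ℝ → ℂ be four times differentiable on [0,1]. Define the quasi-derivatives y^[1] := y', y^[2] := y'' + τ₂·y − τ₁·y', y^[3] := (y^[2])' − τ₁τ₂·y − (2τ₂ − τ₁²)·y' + τ₁·y^[2], y^[4] := (y^[3])' − τ₂²·y + τ₁τ₂·y' + τ₂·y^[2]. Then for every x ∈ [0,1], y^[4](x) = y''''(x) − (τ₁'·y')'(x) + τ₂''(x)·y(x). That is, for classical coefficients, the quasi-derivative scheme generated by the 4×4 Mirzoev–Shkalikov associated matrix with rows (0, 1, 0, 0), (−τ₂, τ₁, 1, 0), (τ₁τ₂, −τ₁² + 2τ₂, −τ₁, 1), (τ₂², −τ₁τ₂, −τ₂, 0) realizes the fourth-order differential expression ℓ₄(y) = y'''' − (p y')' + q y with p = τ₁' and q = τ₂''. -/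

import Mathlib

open Set

/-- Derivative on the interval `[0,1]` (one-sided at the endpoints). -/
noncomputable def D (f : ℝ → ℂ) : ℝ → ℂ := derivWithin f (Set.Icc 0 1)

/-- Let `τ₁, τ₂` be twice continuously differentiable on `[0,1]` and `y`
four times differentiable on `[0,1]`. Define the quasi-derivatives
`y⁽¹⁾ := y'`, `y⁽²⁾ := y'' + τ₂·y - τ₁·y'`,
`y⁽³⁾ := (y⁽²⁾)' - τ₁τ₂·y - (2τ₂ - τ₁²)·y' + τ₁·y⁽²⁾`,
`y⁽⁴⁾ := (y⁽³⁾)' - τ₂²·y + τ₁τ₂·y' + τ₂·y⁽²⁾`.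
Then for every `x ∈ [0,1]`, `y⁽⁴⁾(x) = y''''(x) - (τ₁'·y')'(x) + τ₂''(x)·y(x)`,
i.e. the quasi-derivative scheme generated by the 4×4 Mirzoev–Shkalikov associated matrix
realizes the fourth-order expression `ℓ₄(y) = y'''' - (p y')' + q y` with `p = τ₁'`,
`q = τ₂''`. -/
theorem statement5 (t1 t2 y : ℝ → ℂ)
    (ht1 : DifferentiableOn ℝ t1 (Icc 0 1))
    (ht1' : DifferentiableOn ℝ (D t1) (Icc 0 1))
    (ht1'' : ContinuousOn (D (D t1)) (Icc 0 1))
    (ht2 : DifferentiableOn ℝ t2 (Icc 0 1))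
    (ht2' : DifferentiableOn ℝ (D t2) (Icc 0 1))
    (ht2'' : ContinuousOn (D (D t2)) (Icc 0 1))
    (hy : DifferentiableOn ℝ y (Icc 0 1))
    (hy1 : DifferentiableOn ℝ (D y) (Icc 0 1))
    (hy2 : DifferentiableOn ℝ (D (D y)) (Icc 0 1))
    (hy3 : DifferentiableOn ℝ (D (D (D y))) (Icc 0 1))
    (qy2 qy3 qy4 : ℝ → ℂ)
    (hqy2 : qy2 = fun x => D (D y) x + t2 x * y x - t1 x * D y x)
    (hqy3 : qy3 = fun x => D qy2 x - t1 x * t2 x * y x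
      - (2 * t2 x - (t1 x) ^ 2) * D y x + t1 x * qy2 x)
    (hqy4 : qy4 = fun x => D qy3 x - (t2 x) ^ 2 * y x + t1 x * t2 x * D y x
      + t2 x * qy2 x) :
    ∀ x ∈ Icc (0:ℝ) 1,
      qy4 x = D (D (D (D y))) x - D (fun t => D t1 t * D y t) x + D (D t2) x * y x := by
  have hs : UniqueDiffOn ℝ (Icc (0:ℝ) 1) := uniqueDiffOn_Icc one_pos
  -- simplified formula for qy3 on Icc
  have h3 : ∀ x ∈ Icc (0:ℝ) 1, qy3 x =
      D (D (D y)) x + D t2 x * y x - t2 x * D y x - D t1 x * D y x := by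
    intro x hx
    have hDqy2 : D qy2 x = D (D (D y)) x + (D t2 x * y x + t2 x * D y x)
        - (D t1 x * D y x + t1 x * D (D y) x) := by
      rw [hqy2]
      show derivWithin _ _ _ = _
      rw [derivWithin_fun_sub (f := fun t => D (D y) t + t2 t * y t) (g := fun t => t1 t * D y t)
          (((hy2 x hx).add ((ht2 x hx).mul (hy x hx))))
          ((ht1 x hx).mul (hy1 x hx)),
        derivWithin_fun_add (g := fun t => t2 t * y t) (hy2 x hx) ((ht2 x hx).mul (hy x hx)),
        derivWithin_fun_mul (ht2 x hx) (hy x hx),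
        derivWithin_fun_mul (ht1 x hx) (hy1 x hx)]
      rfl
    rw [hqy3]; simp only [hDqy2]; simp only [hqy2]; ring
  intro x hx
  -- differentiability of the pieces of the simplified qy3
  have d1 : DifferentiableWithinAt ℝ
      (fun t => D (D (D y)) t + D t2 t * y t - t2 t * D y t) (Icc 0 1) x :=
    ((hy3 x hx).add ((ht2' x hx).mul (hy x hx))).sub ((ht2 x hx).mul (hy1 x hx))
  have d2 : DifferentiableWithinAt ℝ (fun t => D t1 t * D y t) (Icc 0 1) x :=
    (ht1' x hx).mul (hy1 x hx)
  have hDqy3 : D qy3 x =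
      (D (D (D (D y))) x + (D (D t2) x * y x + D t2 x * D y x)
        - (D t2 x * D y x + t2 x * D (D y) x))
      - D (fun t => D t1 t * D y t) x := by
    show derivWithin _ _ _ = _
    rw [derivWithin_congr h3 (h3 x hx)]
    rw [derivWithin_fun_sub d1 d2,
      derivWithin_fun_sub (f := fun t => D (D (D y)) t + D t2 t * y t) (g := fun t => t2 t * D y t) ((hy3 x hx).add ((ht2' x hx).mul (hy x hx)))
        ((ht2 x hx).mul (hy1 x hx)),
      derivWithin_fun_add (g := fun t => D t2 t * y t) (hy3 x hx) ((ht2' x hx).mul (hy x hx)),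
      derivWithin_fun_mul (ht2' x hx) (hy x hx),
      derivWithin_fun_mul (ht2 x hx) (hy1 x hx)]
    rfl
  rw [hqy4]
  simp only [hDqy3]; simp only [hqy2]
  ring
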